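/- For every real ζ with 0 < ζ < 1/2 and every integer m ≥ 2 there exist ε₀ > 0 and, for each ε ∈ (0, ε₀], an n₀ ∈ ℕ such that the following holds for all n ≥ n₀. Let G be an n-vertex graph with minimum degree δ(G) ≥ n^{1−ε}. Then there exist a positive integer s ≤ n^ζ and a partition V(G) = V₁ ∪ … ∪ V_s such that, for every i ∈ [s] and every S ⊆ V_i with |S| = m, the common neighbourhood satisfies |⋂_{v∈S} N_G(v)| ≥ n^{1−ζ} + 1. -/

import Mathlib

open Finset
open scoped Classical

noncomputable section AuxStmt5

variable {n : ℕ}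

private def CFx (G : SimpleGraph (Fin n)) (S : Finset (Fin n)) : Finset (Fin n) :=
  Finset.univ.filter (fun x => ∀ v ∈ S, G.Adj v x)

private def NBx (G : SimpleGraph (Fin n)) (x : Fin n) : Finset (Fin n) :=
  Finset.univ.filter (fun y => G.Adj x y)

private lemma CN_eq (G : SimpleGraph (Fin n)) (S : Finset (Fin n)) :
    (⋂ v ∈ S, G.neighborSet v) = ↑(CFx G S) := by
  ext x
  simp [CFx, SimpleGraph.neighborSet]

private lemma NB_eq (G : SimpleGraph (Fin n)) (x : Fin n) :
    G.neighborSet x = ↑(NBx G x) := by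
  ext y
  simp [NBx, SimpleGraph.neighborSet]

private lemma extract (k m : ℕ) (hn : 0 < n) (hm : 0 < m) (G : SimpleGraph (Fin n))
    (D K : ℝ) (hD : 0 ≤ D) (hK : 0 ≤ K)
    (hdeg : ∀ v, D ≤ ((NBx G v).card : ℝ)) (U : Finset (Fin n)) :
    ∃ A ⊆ U, (∀ S ⊆ A, S.card = m → K ≤ ((CFx G S).card : ℝ)) ∧
      ((U.card : ℝ) * D ^ k - (n : ℝ) ^ m * K ^ k) / (n : ℝ) ^ k ≤ (A.card : ℝ) := by
  set Aw : (Fin k → Fin n) → Finset (Fin n) :=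
    fun w => U.filter (fun x => ∀ i, G.Adj (w i) x) with hAwdef
  set BadF : Finset (Finset (Fin n)) :=
    (U.powersetCard m).filter (fun S => ((CFx G S).card : ℝ) < K) with hBadFdef
  -- counting 1
  have count1 : ∀ x : Fin n,
      (Finset.univ.filter (fun w : Fin k → Fin n => ∀ i, G.Adj (w i) x)).card
        = (NBx G x).card ^ k := by
    intro x
    have he : (Finset.univ.filter (fun w : Fin k → Fin n => ∀ i, G.Adj (w i) x))
        = Fintype.piFinset (fun _ : Fin k => NBx G x) := by
      ext w
      simp [Fintype.mem_piFinset, NBx, G.adj_comm]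
    rw [he, Fintype.card_piFinset_const]
  have S1 : ∑ w : Fin k → Fin n, ((Aw w).card) = ∑ x ∈ U, (NBx G x).card ^ k := by
    have hc : ∀ w, (Aw w).card = ∑ x ∈ U, (if (∀ i, G.Adj (w i) x) then 1 else 0) :=
      fun w => Finset.card_filter _ _
    rw [Finset.sum_congr rfl (fun w _ => hc w), Finset.sum_comm]
    refine Finset.sum_congr rfl (fun x _ => ?_)
    rw [← Finset.card_filter, count1]
  -- counting 2
  have count2 : ∀ S ∈ BadF,
      (Finset.univ.filter (fun w : Fin k → Fin n => S ⊆ Aw w)).card = (CFx G S).card ^ k := by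
    intro S hS
    have hSU : S ⊆ U := (Finset.mem_powersetCard.mp (Finset.mem_filter.mp hS).1).1
    have he : (Finset.univ.filter (fun w : Fin k → Fin n => S ⊆ Aw w))
        = Fintype.piFinset (fun _ : Fin k => CFx G S) := by
      ext w
      simp only [Finset.mem_filter, Finset.mem_univ, true_and, Fintype.mem_piFinset]
      constructor
      · intro h i
        simp only [CFx, Finset.mem_filter, Finset.mem_univ, true_and]
        intro v hv
        have := (Finset.mem_filter.mp (h hv)).2 i
        exact G.adj_comm _ _ |>.mp this
      · intro h x hx
        refine Finset.mem_filter.mpr ⟨hSU hx, fun i => ?_⟩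
        have := h i
        simp only [CFx, Finset.mem_filter, Finset.mem_univ, true_and] at this
        exact G.adj_comm _ _ |>.mp (this x hx)
    rw [he, Fintype.card_piFinset_const]
  have S2 : ∑ w : Fin k → Fin n, (BadF.filter (fun S => S ⊆ Aw w)).card
      = ∑ S ∈ BadF, (CFx G S).card ^ k := by
    have hc : ∀ w, (BadF.filter (fun S => S ⊆ Aw w)).card
        = ∑ S ∈ BadF, (if S ⊆ Aw w then 1 else 0) := fun w => Finset.card_filter _ _
    rw [Finset.sum_congr rfl (fun w _ => hc w), Finset.sum_comm]
    refine Finset.sum_congr rfl (fun S hS => ?_)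
    rw [← Finset.card_filter, count2 S hS]
  -- real bounds
  have hBadcard : (BadF.card : ℝ) ≤ (n : ℝ) ^ m := by
    have h1 : BadF.card ≤ (U.powersetCard m).card := Finset.card_filter_le _ _
    have h2 : (U.powersetCard m).card = U.card.choose m := Finset.card_powersetCard _ _
    have h3 : U.card.choose m ≤ n.choose m :=
      Nat.choose_le_choose _ (le_trans (Finset.card_le_univ U) (by simp))
    have h4 : n.choose m ≤ n ^ m := Nat.choose_le_pow _ _
    have : BadF.card ≤ n ^ m := by omega
    exact_mod_cast this
  have hsum2R : (∑ S ∈ BadF, ((CFx G S).card : ℝ) ^ k) ≤ (n : ℝ) ^ m * K ^ k := by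
    calc ∑ S ∈ BadF, ((CFx G S).card : ℝ) ^ k
        ≤ ∑ S ∈ BadF, K ^ k := by
          refine Finset.sum_le_sum (fun S hS => ?_)
          exact pow_le_pow_left₀ (by positivity) (le_of_lt (Finset.mem_filter.mp hS).2) k
      _ = BadF.card * K ^ k := by rw [Finset.sum_const, nsmul_eq_mul]
      _ ≤ (n : ℝ) ^ m * K ^ k := mul_le_mul_of_nonneg_right hBadcard (by positivity)
  have hsum1R : (U.card : ℝ) * D ^ k ≤ ∑ x ∈ U, ((NBx G x).card : ℝ) ^ k := by
    calc (U.card : ℝ) * D ^ k = ∑ _x ∈ U, D ^ k := by rw [Finset.sum_const, nsmul_eq_mul]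
      _ ≤ ∑ x ∈ U, ((NBx G x).card : ℝ) ^ k :=
        Finset.sum_le_sum (fun x _ => pow_le_pow_left₀ hD (hdeg x) k)
  -- averaging
  have hNE : (Finset.univ : Finset (Fin k → Fin n)).Nonempty := by
    have : Nonempty (Fin k → Fin n) := ⟨fun _ => ⟨0, hn⟩⟩
    exact Finset.univ_nonempty
  have hnk : (0 : ℝ) < (n : ℝ) ^ k := by positivity
  obtain ⟨w, -, hw⟩ : ∃ w ∈ (Finset.univ : Finset (Fin k → Fin n)),
      ((U.card : ℝ) * D ^ k - (n : ℝ) ^ m * K ^ k) / (n : ℝ) ^ k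
        ≤ ((Aw w).card : ℝ) - ((BadF.filter (fun S => S ⊆ Aw w)).card : ℝ) := by
    apply Finset.exists_le_of_sum_le hNE
    rw [Finset.sum_const, nsmul_eq_mul, Finset.sum_sub_distrib]
    have hcardW : ((Finset.univ : Finset (Fin k → Fin n)).card : ℝ) = (n : ℝ) ^ k := by
      rw [Finset.card_univ]
      simp
    rw [hcardW, mul_div_cancel₀ _ (ne_of_gt hnk)]
    have e1 : ∑ w : Fin k → Fin n, ((Aw w).card : ℝ)
        = ∑ x ∈ U, ((NBx G x).card : ℝ) ^ k := by exact_mod_cast congrArg (Nat.cast (R := ℝ)) S1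
    have e2 : ∑ w : Fin k → Fin n, ((BadF.filter (fun S => S ⊆ Aw w)).card : ℝ)
        = ∑ S ∈ BadF, ((CFx G S).card : ℝ) ^ k := by exact_mod_cast congrArg (Nat.cast (R := ℝ)) S2
    rw [e1, e2]
    linarith
  -- deletion
  set B := BadF.filter (fun S => S ⊆ Aw w) with hBdef
  set g : Finset (Fin n) → Fin n :=
    fun S => if h : S.Nonempty then S.min' h else ⟨0, hn⟩ with hgdef
  refine ⟨Aw w \ B.image g, (Finset.sdiff_subset).trans (Finset.filter_subset _ _), ?_, ?_⟩
  · intro S hSsub hScard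
    by_contra hlt
    push_neg at hlt
    have hSAw : S ⊆ Aw w := hSsub.trans Finset.sdiff_subset
    have hSB : S ∈ B := by
      refine Finset.mem_filter.mpr ⟨Finset.mem_filter.mpr ⟨Finset.mem_powersetCard.mpr
        ⟨hSAw.trans (Finset.filter_subset _ _), hScard⟩, hlt⟩, hSAw⟩
    have hne : S.Nonempty := Finset.card_pos.mp (by omega)
    have hgS : g S ∈ S := by
      simp only [hgdef, dif_pos hne]
      exact S.min'_mem hne
    have hin : g S ∈ Aw w \ B.image g := hSsub hgS
    exact (Finset.mem_sdiff.mp hin).2 (Finset.mem_image_of_mem g hSB)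
  · have h1 : (Aw w).card ≤ (Aw w \ B.image g).card + (B.image g).card :=
      Finset.card_le_card_sdiff_add_card
    have h2 : (B.image g).card ≤ B.card := Finset.card_image_le
    have h3 : ((Aw w).card : ℝ) - (B.card : ℝ) ≤ ((Aw w \ B.image g).card : ℝ) := by
      have h4 : (Aw w).card ≤ (Aw w \ B.image g).card + B.card := h1.trans (Nat.add_le_add_left h2 _)
      have h5 : ((Aw w).card : ℝ) ≤ ((Aw w \ B.image g).card : ℝ) + (B.card : ℝ) := by
        exact_mod_cast h4
      linarith
    exact le_trans hw h3
private lemma cover (m : ℕ) (hm : 2 ≤ m) (G : SimpleGraph (Fin n)) (K q : ℝ)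
    (hq0 : 0 < q) (hq1 : q ≤ 1) (r : ℕ) (hr : 4 / q ≤ (r : ℝ))
    (hext : ∀ U : Finset (Fin n), ∃ A ⊆ U,
      (∀ S ⊆ A, S.card = m → K ≤ ((CFx G S).card : ℝ)) ∧
      (U.card : ℝ) * q - 1 ≤ (A.card : ℝ)) :
    ∀ (u : ℕ) (U : Finset (Fin n)), U.card ≤ u →
      ∃ L : List (Finset (Fin n)),
        (∀ A ∈ L, ∀ S ⊆ A, S.card = m → K ≤ ((CFx G S).card : ℝ)) ∧
        (∀ v ∈ U, ∃ A ∈ L, v ∈ A) ∧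
        ((L.length : ℝ) ≤ (2 / q) * Real.log (U.card + 1) + r) := by
  intro u
  induction u using Nat.strong_induction_on with
  | _ u ih =>
    intro U hU
    by_cases hsmall : U.card ≤ r
    · refine ⟨U.toList.map (fun x => {x}), ?_, ?_, ?_⟩
      · intro A hA S hS hcard
        simp only [List.mem_map] at hA
        obtain ⟨x, -, rfl⟩ := hA
        have hS1 : S.card ≤ 1 := le_trans (Finset.card_le_card hS) (by simp)
        exact absurd hcard (by omega)
      · intro v hv
        exact ⟨{v}, List.mem_map_of_mem (Finset.mem_toList.mpr hv), Finset.mem_singleton_self v⟩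
      · rw [List.length_map, Finset.length_toList]
        have hlog : 0 ≤ Real.log ((U.card : ℝ) + 1) := Real.log_nonneg (by simp [Nat.cast_nonneg])
        have hcr : (U.card : ℝ) ≤ r := by exact_mod_cast hsmall
        have h2q : (0:ℝ) ≤ 2 / q := by positivity
        nlinarith
    · push_neg at hsmall
      obtain ⟨A, hAU, hAgood, hAcard⟩ := hext U
      have hrU : (r : ℝ) < (U.card : ℝ) := by exact_mod_cast hsmall
      have hq4 : (4 : ℝ) / q ≤ (U.card : ℝ) := le_trans hr hrU.le
      have hUq : (4 : ℝ) ≤ (U.card : ℝ) * q := by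
        rw [div_le_iff₀ hq0] at hq4
        linarith
      have hA3 : (3 : ℝ) ≤ (A.card : ℝ) := by linarith
      have hA1 : 1 ≤ A.card := by exact_mod_cast le_trans (by norm_num : (1:ℝ) ≤ 3) hA3
      have hcard' : (U \ A).card = U.card - A.card := Finset.card_sdiff_of_subset hAU
      have hAle : A.card ≤ U.card := Finset.card_le_card hAU
      have hlt : (U \ A).card < u := by omega
      obtain ⟨L', hG', hC', hL'⟩ := ih (U \ A).card hlt (U \ A) le_rfl
      refine ⟨A :: L', ?_, ?_, ?_⟩
      · intro B hB
        rcases List.mem_cons.mp hB with rfl | hB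
        · exact hAgood
        · exact hG' B hB
      · intro v hv
        by_cases hvA : v ∈ A
        · exact ⟨A, List.mem_cons_self, hvA⟩
        · obtain ⟨B, hB, hvB⟩ := hC' v (Finset.mem_sdiff.mpr ⟨hv, hvA⟩)
          exact ⟨B, List.mem_cons_of_mem _ hB, hvB⟩
      · simp only [List.length_cons]
        have ha' : ((U \ A).card : ℝ) = (U.card : ℝ) - (A.card : ℝ) := by
          rw [hcard', Nat.cast_sub hAle]
        have hstep : ((U \ A).card : ℝ) + 1 ≤ ((U.card : ℝ) + 1) * (1 - q / 2) := by
          rw [ha']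
          nlinarith
        have hpos1 : (0 : ℝ) < ((U \ A).card : ℝ) + 1 := by positivity
        have hpos2 : (0 : ℝ) < 1 - q / 2 := by linarith
        have hlog1 : Real.log (((U \ A).card : ℝ) + 1)
            ≤ Real.log ((U.card : ℝ) + 1) + Real.log (1 - q / 2) := by
          rw [← Real.log_mul (by positivity) (ne_of_gt hpos2)]
          exact Real.log_le_log hpos1 hstep
        have hlog2 : Real.log (1 - q / 2) ≤ - q / 2 := by
          have := Real.log_le_sub_one_of_pos hpos2
          linarith
        have hmul : (2 / q) * Real.log (((U \ A).card : ℝ) + 1)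
            ≤ (2 / q) * Real.log ((U.card : ℝ) + 1) - 1 := by
          have h1 : (2 / q) * Real.log (((U \ A).card : ℝ) + 1)
              ≤ (2 / q) * (Real.log ((U.card : ℝ) + 1) + (- q / 2)) := by
            apply mul_le_mul_of_nonneg_left _ (by positivity)
            linarith
          have h2 : (2 / q) * (q / 2) = 1 := by
            field_simp
          nlinarith
        have hlen : (L'.length : ℝ) ≤ (2 / q) * Real.log (((U \ A).card : ℝ) + 1) + r := hL'
        push_cast
        linarith
end AuxStmt5

theorem stmt5 (ζ : ℝ) (hζ0 : 0 < ζ) (hζ1 : ζ < 1 / 2) (m : ℕ) (hm : 2 ≤ m) :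
    ∃ ε₀ : ℝ, 0 < ε₀ ∧ ∀ ε : ℝ, 0 < ε → ε ≤ ε₀ →
      ∃ n₀ : ℕ, ∀ n : ℕ, n₀ ≤ n →
        ∀ G : SimpleGraph (Fin n),
          (∀ v : Fin n, (n : ℝ) ^ (1 - ε) ≤ ((G.neighborSet v).ncard : ℝ)) →
          ∃ s : ℕ, 0 < s ∧ (s : ℝ) ≤ (n : ℝ) ^ ζ ∧
            ∃ P : Fin n → Fin s,
              ∀ (i : Fin s) (S : Finset (Fin n)), (∀ v ∈ S, P v = i) → S.card = m →
                (n : ℝ) ^ (1 - ζ) + 1 ≤ (((⋂ v ∈ S, G.neighborSet v)).ncard : ℝ) := by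
  have hmR : (2 : ℝ) ≤ (m : ℝ) := by exact_mod_cast hm
  set k := ⌈(2 * (m : ℝ)) / ζ⌉₊ with hkdef
  have hkpos : 0 < k := Nat.ceil_pos.mpr (by positivity)
  have hkR : (1 : ℝ) ≤ (k : ℝ) := by exact_mod_cast hkpos
  have hkζ : 2 * (m : ℝ) ≤ (k : ℝ) * ζ := by
    have h := Nat.le_ceil ((2 * (m : ℝ)) / ζ)
    rw [div_le_iff₀ hζ0] at h
    linarith
  refine ⟨ζ / (4 * (k : ℝ)), by positivity, ?_⟩
  intro ε hε0 hεe
  have hεk : ε * (k : ℝ) ≤ ζ / 4 := by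
    have h1 : ε * (k : ℝ) ≤ (ζ / (4 * (k : ℝ))) * (k : ℝ) :=
      mul_le_mul_of_nonneg_right hεe (by positivity)
    have h2 : (ζ / (4 * (k : ℝ))) * (k : ℝ) = ζ / 4 := by
      field_simp
    linarith
  have hexp2 : (0 : ℝ) < (k : ℝ) * ζ - (m : ℝ) := by linarith
  have hE2 := ((tendsto_rpow_atTop hexp2).comp
    (tendsto_natCast_atTop_atTop (R := ℝ))).eventually_ge_atTop ((2 : ℝ) ^ k)
  have hE3 := ((tendsto_rpow_atTop (show (0 : ℝ) < ζ / 2 by positivity)).comp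
    (tendsto_natCast_atTop_atTop (R := ℝ))).eventually_ge_atTop (16 / ζ + 5)
  have hE1 : ∀ᶠ (x : ℕ) in Filter.atTop, 2 ≤ x := Filter.eventually_ge_atTop 2
  obtain ⟨n₀, hn₀⟩ := Filter.eventually_atTop.mp (hE1.and (hE2.and hE3))
  refine ⟨n₀, ?_⟩
  intro n hn G hdeg0
  obtain ⟨hn2, hE2n, hE3n⟩ := hn₀ n hn
  simp only [Function.comp_apply] at hE2n hE3n
  have hn0R : (0 : ℝ) < (n : ℝ) := by exact_mod_cast (by omega : 0 < n)
  have h1n : (1 : ℝ) ≤ (n : ℝ) := by exact_mod_cast (by omega : 1 ≤ n)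
  set K : ℝ := (n : ℝ) ^ (1 - ζ) + 1 with hKdef
  set D : ℝ := (n : ℝ) ^ (1 - ε) with hDdef
  set p : ℝ := (n : ℝ) ^ (ε * (k : ℝ)) with hpdef
  set q : ℝ := (n : ℝ) ^ (-(ε * (k : ℝ))) with hqdef
  have hp1 : (1 : ℝ) ≤ p := by
    have := Real.rpow_le_rpow_of_exponent_le h1n (show (0:ℝ) ≤ ε * k by positivity)
    rwa [Real.rpow_zero] at this
  have hq0 : (0 : ℝ) < q := Real.rpow_pos_of_pos hn0R _
  have hq1 : q ≤ 1 := Real.rpow_le_one_of_one_le_of_nonpos h1n (neg_nonpos.mpr (by positivity))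
  have hpq : q = p⁻¹ := by rw [hqdef, hpdef, Real.rpow_neg hn0R.le]
  have hK0 : (0 : ℝ) ≤ K := by positivity
  have hD0 : (0 : ℝ) ≤ D := by positivity
  -- the power condition
  have hK2 : K ≤ 2 * (n : ℝ) ^ (1 - ζ) := by
    have h1 : (1 : ℝ) ≤ (n : ℝ) ^ (1 - ζ) := Real.one_le_rpow h1n (by linarith)
    rw [hKdef]; linarith
  have hC2 : (n : ℝ) ^ m * K ^ k ≤ (n : ℝ) ^ k := by
    have hKk : K ^ k ≤ (2 * (n : ℝ) ^ (1 - ζ)) ^ k := pow_le_pow_left₀ hK0 hK2 k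
    have e1 : (2 * (n : ℝ) ^ (1 - ζ)) ^ k = 2 ^ k * (n : ℝ) ^ ((1 - ζ) * (k : ℝ)) := by
      rw [mul_pow, ← Real.rpow_natCast ((n : ℝ) ^ (1 - ζ)) k, ← Real.rpow_mul hn0R.le]
    have e2 : (n : ℝ) ^ m * (2 ^ k * (n : ℝ) ^ ((1 - ζ) * (k : ℝ)))
        = 2 ^ k * (n : ℝ) ^ ((m : ℝ) + (1 - ζ) * (k : ℝ)) := by
      rw [Real.rpow_add hn0R, ← Real.rpow_natCast (n : ℝ) m]; ring
    have e3 : (n : ℝ) ^ ((k : ℝ) * ζ - (m : ℝ)) * (n : ℝ) ^ ((m : ℝ) + (1 - ζ) * (k : ℝ))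
        = (n : ℝ) ^ (k : ℕ) := by
      rw [← Real.rpow_add hn0R, ← Real.rpow_natCast (n : ℝ) k]
      congr 1; ring
    calc (n : ℝ) ^ m * K ^ k ≤ (n : ℝ) ^ m * (2 * (n : ℝ) ^ (1 - ζ)) ^ k :=
          mul_le_mul_of_nonneg_left hKk (by positivity)
      _ = 2 ^ k * (n : ℝ) ^ ((m : ℝ) + (1 - ζ) * (k : ℝ)) := by rw [e1, e2]
      _ ≤ (n : ℝ) ^ ((k : ℝ) * ζ - (m : ℝ)) * (n : ℝ) ^ ((m : ℝ) + (1 - ζ) * (k : ℝ)) :=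
          mul_le_mul_of_nonneg_right hE2n (by positivity)
      _ = (n : ℝ) ^ (k : ℕ) := e3
  -- number of parts bound
  set r : ℕ := ⌈4 * p⌉₊ with hrdef
  have hp0 : (0 : ℝ) < p := by linarith
  have h4q : 4 / q = 4 * p := by
    rw [hpq]
    field_simp
  have h2q : 2 / q = 2 * p := by
    rw [hpq]
    field_simp
  have hr : 4 / q ≤ (r : ℝ) := by rw [h4q]; exact Nat.le_ceil _
  have hC3 : (2 / q) * Real.log ((n : ℝ) + 1) + (r : ℝ) ≤ (n : ℝ) ^ ζ := by
    set a : ℝ := (n : ℝ) ^ (ζ / 4) with hadef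
    set b : ℝ := (n : ℝ) ^ (ζ / 2) with hbdef
    have ha0 : (0 : ℝ) < a := Real.rpow_pos_of_pos hn0R _
    have ha1 : (1 : ℝ) ≤ a := Real.one_le_rpow h1n (by positivity)
    have hb1 : (1 : ℝ) ≤ b := Real.one_le_rpow h1n (by positivity)
    have hab : a ≤ b := Real.rpow_le_rpow_of_exponent_le h1n (by linarith)
    have haab : a * a = b := by
      rw [hadef, hbdef, ← Real.rpow_add hn0R]; congr 1; ring
    have hbb : b * b = (n : ℝ) ^ ζ := by
      rw [hbdef, ← Real.rpow_add hn0R]; congr 1; ring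
    have hpa : p ≤ a := Real.rpow_le_rpow_of_exponent_le h1n (by linarith)
    have hra : (r : ℝ) ≤ 4 * p + 1 := le_of_lt (Nat.ceil_lt_add_one (by positivity))
    have hlog : Real.log ((n : ℝ) + 1) ≤ (8 / ζ) * a := by
      have hx : (0 : ℝ) < (n : ℝ) + 1 := by linarith
      have hrp : (0 : ℝ) < ((n : ℝ) + 1) ^ (ζ / 4) := Real.rpow_pos_of_pos hx _
      have hsub := Real.log_le_sub_one_of_pos hrp
      have hlr : Real.log (((n : ℝ) + 1) ^ (ζ / 4)) = (ζ / 4) * Real.log ((n : ℝ) + 1) :=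
        Real.log_rpow hx _
      have hstep : (ζ / 4) * Real.log ((n : ℝ) + 1) ≤ ((n : ℝ) + 1) ^ (ζ / 4) := by
        rw [← hlr]; linarith
      have hle2 : ((n : ℝ) + 1) ^ (ζ / 4) ≤ 2 * a := by
        have h1 : ((n : ℝ) + 1) ^ (ζ / 4) ≤ (2 * (n : ℝ)) ^ (ζ / 4) :=
          Real.rpow_le_rpow (by linarith) (by linarith) (by positivity)
        have h2 : (2 * (n : ℝ)) ^ (ζ / 4) = 2 ^ (ζ / 4) * a := by
          rw [hadef, Real.mul_rpow (by norm_num) hn0R.le]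
        have h3 : (2 : ℝ) ^ (ζ / 4) ≤ 2 := by
          have := Real.rpow_le_rpow_of_exponent_le (show (1:ℝ) ≤ 2 by norm_num)
            (show ζ / 4 ≤ 1 by linarith)
          rwa [Real.rpow_one] at this
        calc ((n : ℝ) + 1) ^ (ζ / 4) ≤ 2 ^ (ζ / 4) * a := by rw [← h2]; exact h1
          _ ≤ 2 * a := mul_le_mul_of_nonneg_right h3 ha0.le
      have hζ4 : (0 : ℝ) < 4 / ζ := by positivity
      calc Real.log ((n : ℝ) + 1) = (4 / ζ) * ((ζ / 4) * Real.log ((n : ℝ) + 1)) := by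
            field_simp
        _ ≤ (4 / ζ) * (2 * a) := by
            apply mul_le_mul_of_nonneg_left _ hζ4.le
            exact le_trans hstep hle2
        _ = (8 / ζ) * a := by ring
    have hlog0 : (0 : ℝ) ≤ Real.log ((n : ℝ) + 1) := Real.log_nonneg (by linarith)
    have t1 : (2 / q) * Real.log ((n : ℝ) + 1) ≤ (16 / ζ) * b := by
      rw [h2q]
      calc 2 * p * Real.log ((n : ℝ) + 1) ≤ 2 * a * ((8 / ζ) * a) := by
            apply mul_le_mul (by linarith) hlog (by linarith) (by linarith)
        _ = (16 / ζ) * (a * a) := by ring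
        _ = (16 / ζ) * b := by rw [haab]
    have t2 : (r : ℝ) ≤ 5 * b := by linarith
    have t3 : (16 / ζ + 5) * b ≤ b * b := mul_le_mul_of_nonneg_right hE3n (by linarith)
    calc (2 / q) * Real.log ((n : ℝ) + 1) + (r : ℝ) ≤ (16 / ζ) * b + 5 * b := by linarith
      _ = (16 / ζ + 5) * b := by ring
      _ ≤ b * b := t3
      _ = (n : ℝ) ^ ζ := hbb
  -- degrees
  have hdeg : ∀ v, D ≤ ((NBx G v).card : ℝ) := by
    intro v
    have h := hdeg0 v
    rwa [NB_eq, Set.ncard_coe_finset] at h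
  have hqDk : D ^ k / (n : ℝ) ^ k = q := by
    rw [hDdef, ← Real.rpow_natCast ((n : ℝ) ^ (1 - ε)) k, ← Real.rpow_mul hn0R.le,
      ← Real.rpow_natCast (n : ℝ) k, ← Real.rpow_sub hn0R, hqdef]
    congr 1; ring
  have hext : ∀ U : Finset (Fin n), ∃ A ⊆ U,
      (∀ S ⊆ A, S.card = m → K ≤ ((CFx G S).card : ℝ)) ∧
      (U.card : ℝ) * q - 1 ≤ (A.card : ℝ) := by
    intro U
    obtain ⟨A, hAU, hgood, hcard⟩ :=
      extract k m (by omega) (by omega) G D K hD0 hK0 hdeg U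
    refine ⟨A, hAU, hgood, le_trans ?_ hcard⟩
    rw [sub_div, mul_div_assoc, hqDk]
    have hdl : (n : ℝ) ^ m * K ^ k / (n : ℝ) ^ k ≤ 1 :=
      (div_le_one (by positivity)).mpr hC2
    linarith
  obtain ⟨L, hLgood, hLcov, hLlen⟩ :=
    cover m hm G K q hq0 hq1 r hr hext n Finset.univ (by simp)
  simp only [Finset.card_univ, Fintype.card_fin] at hLlen
  have hcovall : ∀ v : Fin n, ∃ i : Fin L.length, v ∈ L.get i := by
    intro v
    obtain ⟨A, hA, hvA⟩ := hLcov v (Finset.mem_univ v)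
    obtain ⟨i, hi⟩ := List.mem_iff_get.mp hA
    exact ⟨i, hi ▸ hvA⟩
  have hslen : (L.length : ℝ) ≤ (n : ℝ) ^ ζ := le_trans hLlen hC3
  refine ⟨L.length, ?_, hslen, ?_⟩
  · obtain ⟨i, -⟩ := hcovall ⟨0, by omega⟩
    exact i.pos
  · refine ⟨fun v => (hcovall v).choose, ?_⟩
    intro i S hSi hScard
    have hsub : S ⊆ L.get i := by
      intro v hv
      have hmem := (hcovall v).choose_spec
      have hPi : (hcovall v).choose = i := hSi v hv
      rwa [hPi] at hmem
    rw [CN_eq, Set.ncard_coe_finset]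
    exact hLgood (L.get i) (L.get_mem i) S hsub hScard
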